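/- For every integer x ≥ 11, there are at least two primes p with x/2 < p ≤ x. -/

import Mathlib

open Real Finset

namespace Ramanujan2

/-- Real analytic inequality, adapted from `Bertrand.real_main_inequality` with an extra
factor `2 * x`. -/
theorem real_main_inequality2 {x : ℝ} (x_large : (512 : ℝ) ≤ x) :
    x * ((2 * x) ^ √(2 * x) * 4 ^ (2 * x / 3) * (2 * x)) ≤ 4 ^ x := by
  let f : ℝ → ℝ := fun x => log x + √(2 * x) * log (2 * x) + log (2 * x) - log 4 / 3 * x
  have hf' : ∀ x : ℝ, 0 < x → 0 < x * (2 * x) ^ √(2 * x) * (2 * x) / 4 ^ (x / 3) := fun x h =>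
    div_pos (mul_pos (mul_pos h (rpow_pos_of_pos (mul_pos two_pos h) _)) (mul_pos two_pos h))
      (rpow_pos_of_pos four_pos _)
  have hf : ∀ x : ℝ, 0 < x → f x = log (x * (2 * x) ^ √(2 * x) * (2 * x) / 4 ^ (x / 3)) := by
    intro x h5
    have h6 := mul_pos (zero_lt_two' ℝ) h5
    have h7 := rpow_pos_of_pos h6 (√(2 * x))
    simp only [f]
    rw [log_div (mul_pos (mul_pos h5 h7) h6).ne' (rpow_pos_of_pos four_pos _).ne',
      log_mul (mul_pos h5 h7).ne' h6.ne', log_mul h5.ne' h7.ne', log_rpow h6,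
      log_rpow zero_lt_four]
    ring
  have h5 : 0 < x := lt_of_lt_of_le (by norm_num1) x_large
  suffices hkey : x * (2 * x) ^ √(2 * x) * (2 * x) ≤ 4 ^ (x / 3) by
    have h4 : (0:ℝ) ≤ 4 ^ (2 * x / 3) := (rpow_pos_of_pos four_pos _).le
    calc x * ((2 * x) ^ √(2 * x) * 4 ^ (2 * x / 3) * (2 * x))
        = (x * (2 * x) ^ √(2 * x) * (2 * x)) * 4 ^ (2 * x / 3) := by ring
      _ ≤ 4 ^ (x / 3) * 4 ^ (2 * x / 3) := by
          exact mul_le_mul_of_nonneg_right hkey h4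
      _ = 4 ^ x := by rw [← rpow_add four_pos, show x / 3 + 2 * x / 3 = x by ring]
  rw [← div_le_one (rpow_pos_of_pos four_pos (x / 3)), ← log_nonpos_iff (hf' x h5).le, ← hf x h5]
  have h : ConcaveOn ℝ (Set.Ioi 0.5) f := by
    apply ConcaveOn.sub
    · apply ConcaveOn.add
      · apply ConcaveOn.add
        · exact strictConcaveOn_log_Ioi.concaveOn.subset
            (Set.Ioi_subset_Ioi (by norm_num)) (convex_Ioi 0.5)
        · convert ((strictConcaveOn_sqrt_mul_log_Ioi.concaveOn.comp_linearMap
            ((2 : ℝ) • LinearMap.id))) using 1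
          iterate 2 rfl
          ext x
          simp only [Set.mem_Ioi, Set.mem_preimage, LinearMap.smul_apply,
            LinearMap.id_coe, id_eq, smul_eq_mul]
          rw [← mul_lt_mul_iff_right₀ (two_pos)]
          norm_num1
          rfl
          rfl
      · have hcomp := strictConcaveOn_log_Ioi.concaveOn.comp_linearMap
          ((2 : ℝ) • LinearMap.id)
        have hsub : Set.Ioi (0.5 : ℝ) ⊆ (⇑((2 : ℝ) • (LinearMap.id : ℝ →ₗ[ℝ] ℝ))) ⁻¹' Set.Ioi 0 := by
          intro y hy
          simp only [Set.mem_preimage, LinearMap.smul_apply, LinearMap.id_coe, id_eq,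
            smul_eq_mul, Set.mem_Ioi] at *
          linarith
        have hres := hcomp.subset hsub (convex_Ioi _)
        exact hres
    apply ConvexOn.smul
    · refine div_nonneg (log_nonneg (by norm_num1)) (by norm_num1)
    · exact convexOn_id (convex_Ioi (0.5 : ℝ))
  suffices ∃ x1 x2, 0.5 < x1 ∧ x1 < x2 ∧ x2 ≤ x ∧ 0 ≤ f x1 ∧ f x2 ≤ 0 by
    obtain ⟨x1, x2, h1, h2, h0, h3, h4⟩ := this
    exact (h.right_le_of_le_left'' h1 ((h1.trans h2).trans_le h0) h2 h0 (h4.trans h3)).trans h4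
  refine ⟨18, 512, by norm_num1, by norm_num1, x_large, ?_, ?_⟩
  · have : √(2 * 18 : ℝ) = 6 := (sqrt_eq_iff_mul_self_eq_of_pos (by norm_num1)).mpr (by norm_num1)
    rw [hf _ (by norm_num1), log_nonneg_iff (hf' _ (by norm_num1)), this,
      one_le_div (by positivity)]
    norm_num1
  · have : √(2 * 512) = 32 :=
      (sqrt_eq_iff_mul_self_eq_of_pos (by norm_num1)).mpr (by norm_num1)
    rw [hf _ (by norm_num1), log_nonpos_iff (hf' _ (by norm_num1)).le, this,
        div_le_one (by positivity)]
    have e1 : (512 : ℝ) * (2 * 512) ^ (32 : ℝ) * (2 * 512) = 2 ^ (339 : ℝ) := by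
      have h2 : ((2 : ℝ) * 512) = 2 ^ (10 : ℝ) := by
        rw [show (10 : ℝ) = ((10 : ℕ) : ℝ) from by norm_num, rpow_natCast]; norm_num
      have h9 : (512 : ℝ) = 2 ^ (9 : ℝ) := by
        rw [show (9 : ℝ) = ((9 : ℕ) : ℝ) from by norm_num, rpow_natCast]; norm_num
      rw [h2, h9, ← rpow_mul (by norm_num), ← rpow_add (by norm_num),
        ← rpow_add (by norm_num)]
      norm_num
    have e2 : (4 : ℝ) ^ ((512 : ℝ) / 3) = 2 ^ ((1024 : ℝ) / 3) := by
      rw [show (4 : ℝ) = 2 ^ (2 : ℝ) from by rw [rpow_two]; norm_num,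
        ← rpow_mul (by norm_num)]
      norm_num
    rw [e1, e2]
    exact rpow_le_rpow_of_exponent_le (by norm_num) (by norm_num)

open Nat

/-- The nat version of the main inequality. -/
theorem main_inequality2 {n : ℕ} (n_large : 512 ≤ n) :
    n * ((2 * n) ^ Nat.sqrt (2 * n) * 4 ^ (2 * n / 3) * (2 * n)) ≤ 4 ^ n := by
  rw [← @Nat.cast_le ℝ]
  simp only [Nat.cast_add, Nat.cast_one, Nat.cast_mul, Nat.cast_pow, ← Real.rpow_natCast]
  refine _root_.trans ?_ (real_main_inequality2 (by exact_mod_cast n_large))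
  gcongr
  · have n2_pos : 0 < 2 * n := by positivity
    rw [Nat.cast_ofNat]
    have n_real : (512 : ℝ) ≤ n := by exact_mod_cast n_large
    exact Real.rpow_le_rpow_of_exponent_le (by linarith)
      (by exact_mod_cast Real.nat_sqrt_le_real_sqrt (a := 2 * n))
  · rw [Nat.cast_ofNat]
    exact Real.rpow_le_rpow_of_exponent_le (by norm_num) (Nat.cast_div_le.trans (by norm_cast))
  · norm_num

/-- Bound on the central binomial coefficient assuming at most one prime in `(n, 2n]`. -/
theorem centralBinom_le_of_le_one_prime (n : ℕ) (n_large : 2 < n)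
    (hP : ((Finset.Ioc n (2 * n)).filter Nat.Prime).card ≤ 1) :
    centralBinom n ≤ (2 * n) ^ Nat.sqrt (2 * n) * 4 ^ (2 * n / 3) * (2 * n) := by
  have n_pos : 0 < n := (Nat.zero_le _).trans_lt n_large
  have n2_pos : 1 ≤ 2 * n := mul_pos (zero_lt_two' ℕ) n_pos
  set P := (Finset.Ioc n (2 * n)).filter Nat.Prime with hPdef
  let f : ℕ → ℕ := fun x => x ^ (centralBinom n).factorization x
  have hdisj : Disjoint (Finset.range (2 * n / 3 + 1)) P := by
    rw [Finset.disjoint_left]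
    intro a ha haP
    rw [Finset.mem_range] at ha
    rw [hPdef, Finset.mem_filter, Finset.mem_Ioc] at haP
    omega
  have key : centralBinom n = (∏ x ∈ Finset.range (2 * n / 3 + 1), f x) * ∏ x ∈ P, f x := by
    rw [← Finset.prod_union hdisj, ← n.prod_pow_factorization_centralBinom]
    refine (Finset.prod_subset ?_ ?_).symm
    · intro x hx
      rw [Finset.mem_union, Finset.mem_range] at hx
      rw [Finset.mem_range]
      rcases hx with hx | hx
      · omega
      · rw [hPdef, Finset.mem_filter, Finset.mem_Ioc] at hx
        omega
    · intro x hx hx'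
      rw [Finset.mem_union, Finset.mem_range, hPdef, Finset.mem_filter, Finset.mem_Ioc] at hx'
      push_neg at hx'
      by_cases hp : x.Prime
      · have h1 : 2 * n / 3 + 1 ≤ x := hx'.1
        have h2 : x ≤ n := by
          by_contra hc
          push_neg at hc
          rw [Finset.mem_range] at hx
          exact absurd hp (hx'.2 ⟨hc, by omega⟩)
        rw [factorization_centralBinom_of_two_mul_self_lt_three_mul n_large h2 (by omega),
          Nat.pow_zero]
      · rw [Nat.factorization_eq_zero_of_not_prime _ hp, Nat.pow_zero]
  rw [key]
  have hT : (∏ x ∈ Finset.range (2 * n / 3 + 1), f x)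
      ≤ (2 * n) ^ Nat.sqrt (2 * n) * 4 ^ (2 * n / 3) := by
    let S := (Finset.range (2 * n / 3 + 1)).filter Nat.Prime
    have hS : ∏ x ∈ S, f x = ∏ x ∈ Finset.range (2 * n / 3 + 1), f x := by
      refine Finset.prod_filter_of_ne fun p _ h => ?_
      contrapose! h; dsimp only [f]
      rw [Nat.factorization_eq_zero_of_not_prime n.centralBinom h, _root_.pow_zero]
    rw [← hS, ← Finset.prod_filter_mul_prod_filter_not S (· ≤ Nat.sqrt (2 * n))]
    apply Nat.mul_le_mul
    · refine (Finset.prod_le_prod' fun p _ => (?_ : f p ≤ 2 * n)).trans ?_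
      · exact Nat.pow_factorization_choose_le (mul_pos two_pos n_pos)
      have hc : (Finset.Icc 1 (Nat.sqrt (2 * n))).card = Nat.sqrt (2 * n) := by
        rw [Nat.card_Icc, Nat.add_sub_cancel]
      rw [Finset.prod_const]
      refine pow_right_mono₀ n2_pos ((Finset.card_le_card fun x hx => ?_).trans hc.le)
      obtain ⟨h1, h2⟩ := Finset.mem_filter.1 hx
      exact Finset.mem_Icc.mpr ⟨(Finset.mem_filter.1 h1).2.one_lt.le, h2⟩
    · refine le_trans ?_ (primorial_le_4_pow (2 * n / 3))
      refine (Finset.prod_le_prod' fun p hp => (?_ : f p ≤ p)).trans ?_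
      · obtain ⟨h1, h2⟩ := Finset.mem_filter.1 hp
        refine (pow_right_mono₀ (Finset.mem_filter.1 h1).2.one_lt.le ?_).trans (pow_one p).le
        exact Nat.factorization_choose_le_one (Nat.sqrt_lt'.mp <| not_le.1 h2)
      refine Finset.prod_le_prod_of_subset_of_one_le' (Finset.filter_subset _ _) ?_
      exact fun p hp _ => (Finset.mem_filter.1 hp).2.one_lt.le
  have hPle : (∏ x ∈ P, f x) ≤ 2 * n := by
    have hstep : (∏ x ∈ P, f x) ≤ ∏ _x ∈ P, 2 * n := by
      refine Finset.prod_le_prod' fun p hp => ?_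
      rw [hPdef, Finset.mem_filter, Finset.mem_Ioc] at hp
      obtain ⟨⟨hn1, hn2⟩, hprime⟩ := hp
      have hsq : Nat.sqrt (2 * n) < p := by
        have : Nat.sqrt (2 * n) ≤ n := by
          calc Nat.sqrt (2 * n) ≤ Nat.sqrt (n ^ 2) := Nat.sqrt_le_sqrt (by nlinarith)
            _ = n := Nat.sqrt_eq' n
        omega
      have hfac : (centralBinom n).factorization p ≤ 1 :=
        Nat.factorization_choose_le_one (Nat.sqrt_lt'.mp hsq)
      calc f p ≤ p ^ 1 := pow_right_mono₀ hprime.one_lt.le hfac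
        _ = p := pow_one p
        _ ≤ 2 * n := hn2
    refine hstep.trans ?_
    rw [Finset.prod_const]
    calc (2 * n) ^ P.card ≤ (2 * n) ^ 1 := Nat.pow_le_pow_right (by omega) hP
      _ = 2 * n := pow_one _
  exact Nat.mul_le_mul hT hPle

/-- Two primes in `(n, 2n]`, for large `n`. -/
theorem two_primes_large (n : ℕ) (n_large : 512 ≤ n) :
    ∃ p q : ℕ, p.Prime ∧ q.Prime ∧ p < q ∧ n < p ∧ q ≤ 2 * n := by
  by_contra hc
  have hP : ((Finset.Ioc n (2 * n)).filter Nat.Prime).card ≤ 1 := by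
    by_contra h2
    push_neg at h2
    obtain ⟨a, ha, b, hb, hab⟩ := Finset.one_lt_card.mp h2
    rw [Finset.mem_filter, Finset.mem_Ioc] at ha hb
    rcases Nat.lt_or_ge a b with hlt | hge
    · exact hc ⟨a, b, ha.2, hb.2, hlt, ha.1.1, hb.1.2⟩
    · exact hc ⟨b, a, hb.2, ha.2, by omega, hb.1.1, ha.1.2⟩
  have H1 := main_inequality2 n_large
  have H2 : 4 ^ n < n * n.centralBinom :=
    Nat.four_pow_lt_mul_centralBinom n (le_trans (by norm_num1) n_large)
  have H3 := centralBinom_le_of_le_one_prime n (by omega) hP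
  exact not_le.2 H2 ((Nat.mul_le_mul_left n H3).trans H1)

theorem tp_step {n : ℕ} (a q : ℕ) {p : ℕ} (hp : p.Prime) (hq : q.Prime) (hpq : p < q)
    (hqa : q ≤ 2 * a)
    (H : n < a → ∃ p q : ℕ, p.Prime ∧ q.Prime ∧ p < q ∧ n < p ∧ q ≤ 2 * n) :
    n < p → ∃ p q : ℕ, p.Prime ∧ q.Prime ∧ p < q ∧ n < p ∧ q ≤ 2 * n := by
  intro hn
  by_cases h : q ≤ 2 * n
  · exact ⟨p, q, hp, hq, hpq, hn, h⟩
  · exact H (by omega)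

/-- **Ramanujan**: there are at least two primes in `(n, 2n]` for `n ≥ 6`. -/
theorem two_primes (n : ℕ) (hn : 6 ≤ n) :
    ∃ p q : ℕ, p.Prime ∧ q.Prime ∧ p < q ∧ n < p ∧ q ≤ 2 * n := by
  rcases lt_or_ge n 512 with h | h
  · have h521 : n < 521 := by omega
    revert h521
    refine tp_step 263 523 (by norm_num1) (by norm_num1) (by norm_num1) (by norm_num1) ?_
    refine tp_step 137 269 (by norm_num1) (by norm_num1) (by norm_num1) (by norm_num1) ?_
    refine tp_step 71 139 (by norm_num1) (by norm_num1) (by norm_num1) (by norm_num1) ?_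
    refine tp_step 37 73 (by norm_num1) (by norm_num1) (by norm_num1) (by norm_num1) ?_
    refine tp_step 23 41 (by norm_num1) (by norm_num1) (by norm_num1) (by norm_num1) ?_
    refine tp_step 17 29 (by norm_num1) (by norm_num1) (by norm_num1) (by norm_num1) ?_
    refine tp_step 11 19 (by norm_num1) (by norm_num1) (by norm_num1) (by norm_num1) ?_
    refine tp_step 7 13 (by norm_num1) (by norm_num1) (by norm_num1) (by norm_num1) ?_
    refine tp_step 6 11 (by norm_num1) (by norm_num1) (by norm_num1) (by norm_num1) ?_
    exact fun h6 => absurd h6 (by omega)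
  · exact two_primes_large n h

end Ramanujan2

theorem stmt_16 (x : ℕ) (hx : 11 ≤ x) :
    2 ≤ ((Finset.Icc 1 x).filter (fun p => Nat.Prime p ∧ x < 2 * p)).card := by
  rcases eq_or_lt_of_le hx with h11 | h12
  · subst h11
    decide
  · have h12' : 12 ≤ x := h12
    obtain ⟨p, q, hp, hq, hpq, hkp, hq2k⟩ := Ramanujan2.two_primes (x / 2) (by omega)
    have hsub : ({p, q} : Finset ℕ) ⊆
        (Finset.Icc 1 x).filter (fun p => Nat.Prime p ∧ x < 2 * p) := by
      intro a ha
      rw [Finset.mem_insert, Finset.mem_singleton] at ha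
      rw [Finset.mem_filter, Finset.mem_Icc]
      rcases ha with rfl | rfl
      · exact ⟨⟨hp.one_lt.le, by omega⟩, hp, by omega⟩
      · exact ⟨⟨hq.one_lt.le, by omega⟩, hq, by omega⟩
    calc 2 = ({p, q} : Finset ℕ).card := (Finset.card_pair hpq.ne).symm
      _ ≤ _ := Finset.card_le_card hsub
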